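/- Let u : ℝ² → ℝ² be C², globally Lipschitz, with divergence ∇·u, and let x̄ : ℝ → ℝ² solve x̄′(p) = u(x̄(p)) with u(x̄(p)) ≠ 0 for every p. Fix p^u < p^d and suppose (closed-interface condition) x̄ is periodic with period p^d − p^u, so a := x̄(p^u) = x̄(p^d) =: b, and that w(a,t) = 0 for all t. Define M^d_ε(p,t) := −ε ∫_{p}^{p^d} exp(∫_τ^p (∇·u)(x̄(ξ)) dξ) ⟨J u(x̄(τ)), w(x̄(τ), τ + t − p)⟩ dτ for all p ∈ ℝ. Then for every P > 0 there exist C > 0 and ε₀ > 0 such that for all p ∈ [−P, P], all t ∈ ℝ, and all ε ∈ (0, ε₀], |⟨x_ε^d(p,t) − x̄(p), n̂(p)⟩ − M^d_ε(p,t)/|u(x̄(p))|| ≤ C ε². -/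

import Mathlib

open scoped InnerProductSpace NNReal

noncomputable section

/-- The plane with its Euclidean inner product. -/
abbrev E2 : Type := EuclideanSpace ℝ (Fin 2)

/-- Rotation by +π/2 : J(x₁,x₂) = (−x₂, x₁). -/
noncomputable def Jrot : E2 → E2 :=
  fun x => (WithLp.equiv 2 (Fin 2 → ℝ)).symm ![-(x 1), x 0]

/-- Divergence of a planar vector field, as the trace of its Fréchet derivative. -/
noncomputable def div2 (u : E2 → E2) (x : E2) : ℝ :=
  LinearMap.trace ℝ E2 (fderiv ℝ u x).toLinearMap

/-- The leading-order downstream streakline displacement function (closed interface). -/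
noncomputable def MdClosed (u : E2 → E2) (xbar : ℝ → E2) (w : E2 → ℝ → E2)
    (pd ε p t : ℝ) : ℝ :=
  -(ε * ∫ τ in p..pd,
    Real.exp (∫ ξ in τ..p, div2 u (xbar ξ)) *
      ⟪Jrot (u (xbar τ)), w (xbar τ) (τ + t - p)⟫_ℝ)

namespace StreaklineAux

noncomputable def e0 : E2 := EuclideanSpace.basisFun (Fin 2) ℝ 0
noncomputable def e1 : E2 := EuclideanSpace.basisFun (Fin 2) ℝ 1

lemma decomp (b : E2) : b = b 0 • e0 + b 1 • e1 := by
  ext i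
  fin_cases i <;> simp [e0, e1, EuclideanSpace.basisFun_apply]

lemma trace_eq (A : E2 →L[ℝ] E2) :
    LinearMap.trace ℝ E2 A.toLinearMap = A e0 0 + A e1 1 := by
  rw [LinearMap.trace_eq_matrix_trace ℝ (EuclideanSpace.basisFun (Fin 2) ℝ).toBasis]
  simp [Matrix.trace, LinearMap.toMatrix_apply, Fin.sum_univ_two, e0, e1]

lemma traceJ (A : E2 →L[ℝ] E2) (a b : E2) :
    ⟪Jrot a, A b⟫_ℝ + ⟪Jrot (A a), b⟫_ℝ
      = (LinearMap.trace ℝ E2 A.toLinearMap) * ⟪Jrot a, b⟫_ℝ := by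
  have hAb : ∀ x : E2, A x = x 0 • A e0 + x 1 • A e1 := by
    intro x
    conv_lhs => rw [decomp x]
    simp [map_add, map_smul]
  rw [trace_eq, hAb a, hAb b]
  simp only [PiLp.inner_apply, Fin.sum_univ_two, RCLike.inner_apply, conj_trivial,
    PiLp.add_apply, PiLp.smul_apply, smul_eq_mul, Jrot, WithLp.equiv_symm_apply, PiLp.toLp_apply,
    Matrix.cons_val_zero, Matrix.cons_val_one, Matrix.head_cons]
  ring

lemma Jrot_norm (x : E2) : ‖Jrot x‖ = ‖x‖ := by
  simp only [EuclideanSpace.norm_eq, Fin.sum_univ_two]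
  simp [Jrot]
  ring_nf

/-- `Jrot` as a continuous linear map. -/
noncomputable def JL : E2 →L[ℝ] E2 :=
  LinearMap.toContinuousLinearMap
    { toFun := Jrot
      map_add' := by
        intro x y; ext i; fin_cases i <;> simp [Jrot] <;> ring
      map_smul' := by
        intro c x; ext i; fin_cases i <;> simp [Jrot] <;> ring }

lemma JL_apply (x : E2) : JL x = Jrot x := rfl

lemma gronwall_abs {E : Type*} [NormedAddCommGroup E] [NormedSpace ℝ E]
    {f f' : ℝ → E} {K C a : ℝ}
    (hd : ∀ τ, HasDerivAt f (f' τ) τ) (h0 : f a = 0)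
    (hb : ∀ τ, ‖f' τ‖ ≤ K * ‖f τ‖ + C) (τ : ℝ) :
    ‖f τ‖ ≤ gronwallBound 0 K C |τ - a| := by
  rcases le_or_gt a τ with h | h
  · have := norm_le_gronwallBound_of_norm_deriv_right_le
      (f := f) (f' := f') (δ := 0) (K := K) (ε := C) (a := a) (b := τ)
      (fun x _ => (hd x).continuousAt.continuousWithinAt)
      (fun x _ => (hd x).hasDerivWithinAt)
      (by simp [h0]) (fun x _ => hb x) τ ⟨h, le_refl τ⟩
    rwa [abs_of_nonneg (by linarith)]
  · set g : ℝ → E := fun s => f (2*a - s) with hg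
    set g' : ℝ → E := fun s => (-1 : ℝ) • f' (2*a - s) with hg'
    have hdg : ∀ s, HasDerivAt g (g' s) s := by
      intro s
      exact (hd (2*a - s)).scomp s (((hasDerivAt_id s).const_sub (2*a)))
    have key := norm_le_gronwallBound_of_norm_deriv_right_le
      (f := g) (f' := g') (δ := 0) (K := K) (ε := C) (a := a) (b := 2*a - τ)
      (fun x _ => (hdg x).continuousAt.continuousWithinAt)
      (fun x _ => (hdg x).hasDerivWithinAt)
      (by simp [hg, h0, show 2*a - a = a by ring])
      (fun x _ => by simpa [hg', hg, norm_smul] using hb (2*a - x))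
      (2*a - τ) ⟨by linarith, le_refl _⟩
    have : g (2*a - τ) = f τ := by simp [hg, show 2*a - (2*a - τ) = τ by ring]
    rw [this] at key
    rwa [abs_of_neg (by linarith), show -(τ - a) = 2*a - τ - a by ring]

lemma gronwallBound_le {K C x L : ℝ} (hK : 0 < K) (hC : 0 ≤ C) (hL : x ≤ L) :
    gronwallBound 0 K C x ≤ C / K * (Real.exp (K * L) - 1) := by
  rw [gronwallBound_of_K_ne_0 hK.ne']
  have h1 : Real.exp (K * x) ≤ Real.exp (K * L) := by
    apply Real.exp_le_exp.2; nlinarith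
  have h2 : (0:ℝ) ≤ C / K := div_nonneg hC hK.le
  nlinarith [Real.exp_pos (K*x), Real.exp_pos (K*L)]

lemma hasDerivAt_intb {d : ℝ → ℝ} (hd : Continuous d) (p τ : ℝ) :
    HasDerivAt (fun s => ∫ ξ in s..p, d ξ) (-(d τ)) τ := by
  have h1 : HasDerivAt (fun s => ∫ ξ in p..s, d ξ) (d τ) τ :=
    intervalIntegral.integral_hasDerivAt_right (hd.intervalIntegrable _ _)
      (hd.stronglyMeasurable.stronglyMeasurableAtFilter) hd.continuousAt
  have := h1.neg
  simp only [intervalIntegral.integral_symm p]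
  exact this

lemma div2_cont {u : E2 → E2} (hu : ContDiff ℝ 2 u) : Continuous (div2 u) := by
  have hfd : Continuous (fderiv ℝ u) :=
    (hu.fderiv_right (m := 1) (by norm_num)).continuous
  have : div2 u = fun x => (fderiv ℝ u x) e0 0 + (fderiv ℝ u x) e1 1 := by
    funext x
    exact trace_eq (fderiv ℝ u x)
  rw [this]
  have h0 : Continuous fun x => (fderiv ℝ u x) e0 :=
    hfd.clm_apply continuous_const
  have h1 : Continuous fun x => (fderiv ℝ u x) e1 :=
    hfd.clm_apply continuous_const
  exact ((EuclideanSpace.proj (0 : Fin 2)).continuous.comp h0).add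
    ((EuclideanSpace.proj (1 : Fin 2)).continuous.comp h1)

lemma taylor_bound {u : E2 → E2} (hu : ContDiff ℝ 2 u) {s : Set E2} (hs : Convex ℝ s)
    {B : ℝ} (hB : ∀ z ∈ s, ‖fderiv ℝ (fderiv ℝ u) z‖ ≤ B)
    {x y : E2} (hx : x ∈ s) (hy : y ∈ s) :
    ‖u y - u x - fderiv ℝ u x (y - x)‖ ≤ B * ‖y - x‖ * ‖y - x‖ := by
  have hd1 : Differentiable ℝ u := hu.differentiable (by norm_num)
  have hd2 : Differentiable ℝ (fderiv ℝ u) :=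
    (hu.fderiv_right (m := 1) (by norm_num)).differentiable (by norm_num)
  have hB0 : 0 ≤ B := le_trans (norm_nonneg (fderiv ℝ (fderiv ℝ u) x)) (hB x hx)
  have hseg : segment ℝ x y ⊆ s := hs.segment_subset hx hy
  have hLip : ∀ z ∈ segment ℝ x y, ‖fderiv ℝ u z - fderiv ℝ u x‖ ≤ B * ‖y - x‖ := by
    intro z hz
    obtain ⟨a, b, ha, hb, hab, rfl⟩ := hz
    have hdiff : a • x + b • y - x = b • (y - x) := by
      have hA : a = 1 - b := by linarith
      rw [hA]; simp [sub_smul, smul_sub]; abel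
    have hMVT := hs.norm_image_sub_le_of_norm_hasFDerivWithin_le
      (f := fderiv ℝ u) (f' := fun z => fderiv ℝ (fderiv ℝ u) z) (C := B)
      (fun z hzs => (hd2 z).hasFDerivAt.hasFDerivWithinAt) hB
      hx (hseg ⟨a, b, ha, hb, hab, rfl⟩)
    calc ‖fderiv ℝ u (a • x + b • y) - fderiv ℝ u x‖ ≤ B * ‖a • x + b • y - x‖ := hMVT
      _ = B * (b * ‖y - x‖) := by rw [hdiff, norm_smul, Real.norm_eq_abs, abs_of_nonneg hb]
      _ ≤ B * ‖y - x‖ := by nlinarith [mul_nonneg (mul_nonneg hB0 (norm_nonneg (y - x))) (show (0:ℝ) ≤ 1 - b by linarith)]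
  have := (convex_segment x y).norm_image_sub_le_of_norm_hasFDerivWithin_le'
    (f := u) (f' := fun z => fderiv ℝ u z) (φ := fderiv ℝ u x) (C := B * ‖y - x‖)
    (fun z _ => (hd1 z).hasFDerivAt.hasFDerivWithinAt) hLip
    (left_mem_segment ℝ x y) (right_mem_segment ℝ x y)
  linarith [this]

end StreaklineAux

set_option maxHeartbeats 2000000 in
open StreaklineAux in
/-- **Downstream streakline theorem, closed interface.**  For a steady C² globally
Lipschitz planar field `u` with a nonvanishing periodic streakline `x̄` of
period `pd − pu`, and a bounded C¹ agitation `w` vanishing at the anchor point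
`a = x̄(pu) = x̄(pd) = b`, the normal displacement of the agitated downstream
streakline `x_ε^d(p,t)` from `x̄(p)` equals `M^d_ε(p,t)/|u(x̄(p))|` up to an
error of order `ε²`, uniformly for `p ∈ [−P,P]` and `t ∈ ℝ`. -/
theorem downstream_streakline_closed
    (u : E2 → E2) (hu : ContDiff ℝ 2 u)
    (K : ℝ≥0) (huLip : LipschitzWith K u)
    (xbar : ℝ → E2) (hxbar : ∀ p : ℝ, HasDerivAt xbar (u (xbar p)) p)
    (hune : ∀ p : ℝ, u (xbar p) ≠ 0)
    (pu pd : ℝ) (hpp : pu < pd)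
    (hper : Function.Periodic xbar (pd - pu))
    (w : E2 → ℝ → E2) (hw : ContDiff ℝ 1 (Function.uncurry w))
    (Cw : ℝ) (hwbdd : ∀ (x : E2) (t : ℝ), ‖w x t‖ ≤ Cw)
    (Kw : ℝ≥0) (hwLip : ∀ t : ℝ, LipschitzWith Kw (fun x => w x t))
    (hanchor : ∀ t : ℝ, w (xbar pu) t = 0) :
    ∀ P > (0:ℝ), ∃ C > (0:ℝ), ∃ ε₀ > (0:ℝ),
      ∀ p ∈ Set.Icc (-P) P, ∀ t : ℝ, ∀ ε ∈ Set.Ioc (0:ℝ) ε₀,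
        ∀ X : ℝ → E2,
          (∀ s : ℝ, HasDerivAt X (u (X s) + ε • w (X s) s) s) →
          X (t - p + pd) = xbar pd →
          |⟪X t - xbar p, (‖u (xbar p)‖)⁻¹ • Jrot (u (xbar p))⟫_ℝ
            - MdClosed u xbar w pd ε p t / ‖u (xbar p)‖| ≤ C * ε ^ 2 := by
  intro P hP
  -- basic continuity facts
  have hxc : Continuous xbar := continuous_iff_continuousAt.2 fun q => (hxbar q).continuousAt
  have huc : Continuous u := hu.continuous
  have hwc : Continuous (Function.uncurry w) := hw.continuous
  have hdivc : Continuous fun ξ => div2 u (xbar ξ) := (div2_cont hu).comp hxc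
  -- the streakline has compact range
  have hrange : IsCompact (Set.range xbar) := by
    rw [← hper.image_uIcc (by intro h; exact absurd (sub_eq_zero.1 h).symm hpp.ne) pu]
    exact isCompact_uIcc.image hxc
  obtain ⟨A₀, hA₀⟩ := hrange.isBounded.subset_closedBall 0
  set A := max A₀ 0 with hAdef
  have hxbdd : ∀ q, ‖xbar q‖ ≤ A := by
    intro q
    have h1 : xbar q ∈ Metric.closedBall (0:E2) A₀ := hA₀ ⟨q, rfl⟩
    rw [Metric.mem_closedBall, dist_zero_right] at h1
    exact le_trans h1 (le_max_left _ _)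
  set Ball := Metric.closedBall (0:E2) (A + 1) with hBalldef
  have hBallconv : Convex ℝ Ball := convex_closedBall _ _
  have hBallcpt : IsCompact Ball := isCompact_closedBall _ _
  -- bound on the second derivative of u on Ball
  have hfd2c : Continuous (fderiv ℝ (fderiv ℝ u)) :=
    ((hu.fderiv_right (m := 1) (by norm_num)).fderiv_right (m := 0)
      (by norm_num)).continuous
  obtain ⟨B₀, hB₀⟩ := hBallcpt.exists_bound_of_continuousOn (f := fderiv ℝ (fderiv ℝ u)) hfd2c.continuousOn
  set B := max B₀ 0 with hBdef
  have hB : ∀ z ∈ Ball, ‖fderiv ℝ (fderiv ℝ u) z‖ ≤ B :=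
    fun z hz => le_trans (hB₀ z hz) (le_max_left _ _)
  have hB0 : 0 ≤ B := le_max_right _ _
  -- bound on the velocity along the streakline
  obtain ⟨Mu₀, hMu₀⟩ := hrange.exists_bound_of_continuousOn huc.continuousOn
  set Mu := max Mu₀ 0 with hMudef
  have hMu : ∀ q, ‖u (xbar q)‖ ≤ Mu := fun q => le_trans (hMu₀ _ ⟨q, rfl⟩) (le_max_left _ _)
  have hMu0 : 0 ≤ Mu := le_max_right _ _
  -- divergence bound on a large parameter interval
  set Q := P + |pd| + 1 with hQdef
  have hQ0 : 0 < Q := by have := abs_nonneg pd; linarith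
  set L := 2 * Q with hLdef
  have hL0 : 0 < L := by linarith
  obtain ⟨D₀, hD₀⟩ := (isCompact_Icc (a := -Q) (b := Q)).exists_bound_of_continuousOn
    hdivc.continuousOn
  set Dbd := max D₀ 0 with hDdef
  have hDbd : ∀ ξ ∈ Set.Icc (-Q) Q, |div2 u (xbar ξ)| ≤ Dbd := by
    intro ξ hξ
    have := hD₀ ξ hξ
    rw [Real.norm_eq_abs] at this
    exact le_trans this (le_max_left _ _)
  have hDbd0 : 0 ≤ Dbd := le_max_right _ _
  set Gbd := Real.exp (Dbd * L) with hGbddef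
  have hGbd0 : 0 < Gbd := Real.exp_pos _
  -- minimum speed on [-P, P]
  obtain ⟨τ₀, hτ₀mem, hτ₀min⟩ := (isCompact_Icc (a := -P) (b := P)).exists_isMinOn
    (Set.nonempty_Icc.2 (by linarith)) ((huc.comp hxc).norm.continuousOn)
  set c := ‖u (xbar τ₀)‖ with hcdef
  have hc0 : 0 < c := norm_pos_iff.2 (hune τ₀)
  have hcmin : ∀ q ∈ Set.Icc (-P) P, c ≤ ‖u (xbar q)‖ := fun q hq => hτ₀min hq
  -- constants
  have hCw0 : 0 ≤ Cw := le_trans (norm_nonneg _) (hwbdd 0 0)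
  set K' := (K:ℝ) + 1 with hK'def
  have hK'0 : 0 < K' := by positivity
  set C₁ := Cw / K' * (Real.exp (K' * L) - 1) with hC₁def
  have hC₁0 : 0 ≤ C₁ := by
    apply mul_nonneg (div_nonneg hCw0 hK'0.le)
    have : (1:ℝ) ≤ Real.exp (K' * L) := Real.one_le_exp (by positivity)
    linarith
  set CR := B * C₁^2 + (Kw:ℝ) * C₁ with hCRdef
  have hCR0 : 0 ≤ CR := add_nonneg (mul_nonneg hB0 (sq_nonneg _))
    (mul_nonneg (Kw.coe_nonneg) hC₁0)
  set Cfin := c⁻¹ * (Gbd * (Mu * CR) * L) + 1 with hCfindef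
  have hCfin0 : 0 < Cfin := by
    have h1 : 0 ≤ c⁻¹ * (Gbd * (Mu * CR) * L) :=
      mul_nonneg (inv_nonneg.2 hc0.le)
        (mul_nonneg (mul_nonneg hGbd0.le (mul_nonneg hMu0 hCR0)) hL0.le)
    rw [hCfindef]
    linarith
  refine ⟨Cfin, hCfin0, min 1 (1/(C₁+1)), lt_min one_pos (by positivity), ?_⟩
  intro p hp t ε hε X hX hX0
  obtain ⟨hε0, hεε₀⟩ := hε
  have hε1 : ε ≤ 1 := le_trans hεε₀ (min_le_left _ _)
  have hεC₁ : ε * C₁ ≤ 1 := by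
    have h1 : ε ≤ 1/(C₁+1) := le_trans hεε₀ (min_le_right _ _)
    have h2 : (0:ℝ) < C₁ + 1 := by linarith
    rw [le_div_iff₀ h2] at h1
    nlinarith
  -- interval inclusions
  have hpQ : p ∈ Set.Icc (-Q) Q := by
    constructor
    · have := hp.1; have := abs_nonneg pd; simp only [hQdef]; linarith
    · have := hp.2; have := abs_nonneg pd; simp only [hQdef]; linarith
  have hpdQ : pd ∈ Set.Icc (-Q) Q := by
    constructor
    · have := neg_abs_le pd; simp only [hQdef]; linarith
    · have := le_abs_self pd; simp only [hQdef]; linarith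
  have hsub : Set.uIcc p pd ⊆ Set.Icc (-Q) Q := Set.uIcc_subset_Icc hpQ hpdQ
  -- the shifted solution and its deviation
  have hXc : Continuous X := continuous_iff_continuousAt.2 fun s => (hX s).continuousAt
  set Z : ℝ → E2 := fun τ => X (τ + t - p) with hZdef
  have hZc : Continuous Z := by
    rw [hZdef]; exact hXc.comp (((continuous_id.add continuous_const).sub continuous_const))
  have hZd : ∀ τ, HasDerivAt Z (u (Z τ) + ε • w (Z τ) (τ + t - p)) τ := by
    intro τ
    have h1 := (hX (τ + t - p)).scomp τ (((hasDerivAt_id τ).add_const t).sub_const p)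
    rw [one_smul] at h1
    exact h1
  have hZpd : Z pd = xbar pd := by
    simp only [hZdef]
    rw [show pd + t - p = t - p + pd from by ring]
    exact hX0
  set δ : ℝ → E2 := fun τ => Z τ - xbar τ with hδdef
  have hδeq : ∀ τ, Z τ - xbar τ = δ τ := fun τ => rfl
  have hδc : Continuous δ := by rw [hδdef]; exact hZc.sub hxc
  have hδd : ∀ τ, HasDerivAt δ (u (Z τ) + ε • w (Z τ) (τ + t - p) - u (xbar τ)) τ := by
    intro τ
    simp only [hδdef]
    exact (hZd τ).sub (hxbar τ)
  have hδpd : δ pd = 0 := by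
    simp only [hδdef, hZpd, sub_self]
  -- Gronwall estimate
  have hδ'bd : ∀ τ, ‖u (Z τ) + ε • w (Z τ) (τ + t - p) - u (xbar τ)‖ ≤ K' * ‖δ τ‖ + ε * Cw := by
    intro τ
    have h1 : ‖u (Z τ) - u (xbar τ)‖ ≤ K * ‖δ τ‖ := by
      have h2 := huLip.dist_le_mul (Z τ) (xbar τ)
      rw [dist_eq_norm, dist_eq_norm, hδeq τ] at h2
      exact h2
    have h3 : ‖ε • w (Z τ) (τ + t - p)‖ ≤ ε * Cw := by
      rw [norm_smul, Real.norm_eq_abs, abs_of_pos hε0]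
      exact mul_le_mul_of_nonneg_left (hwbdd _ _) hε0.le
    calc ‖u (Z τ) + ε • w (Z τ) (τ + t - p) - u (xbar τ)‖
        = ‖(u (Z τ) - u (xbar τ)) + ε • w (Z τ) (τ + t - p)‖ := by
          congr 1; abel
      _ ≤ ‖u (Z τ) - u (xbar τ)‖ + ‖ε • w (Z τ) (τ + t - p)‖ := norm_add_le _ _
      _ ≤ K' * ‖δ τ‖ + ε * Cw := by
          have h4 : (K:ℝ) * ‖δ τ‖ ≤ K' * ‖δ τ‖ := by
            have := norm_nonneg (δ τ)
            simp only [hK'def]; nlinarith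
          linarith
  have hgron : ∀ τ ∈ Set.uIcc p pd, ‖δ τ‖ ≤ ε * C₁ := by
    intro τ hτ
    have h1 := gronwall_abs (f := δ)
      (f' := fun τ => u (Z τ) + ε • w (Z τ) (τ + t - p) - u (xbar τ))
      (K := K') (C := ε * Cw) (a := pd) hδd hδpd hδ'bd τ
    have hτQ := hsub hτ
    have h2 : |τ - pd| ≤ L := by
      rw [abs_sub_le_iff]
      constructor <;> simp only [hLdef] <;> linarith [hτQ.1, hτQ.2, hpdQ.1, hpdQ.2]
    have h3 := gronwallBound_le hK'0 (mul_nonneg hε0.le hCw0) h2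
    calc ‖δ τ‖ ≤ _ := h1
      _ ≤ ε * Cw / K' * (Real.exp (K' * L) - 1) := h3
      _ = ε * C₁ := by rw [hC₁def]; ring
  -- everything stays in Ball
  have hxB : ∀ q, xbar q ∈ Ball := by
    intro q
    rw [hBalldef, Metric.mem_closedBall, dist_zero_right]
    linarith [hxbdd q]
  have hZB : ∀ τ ∈ Set.uIcc p pd, Z τ ∈ Ball := by
    intro τ hτ
    rw [hBalldef, Metric.mem_closedBall, dist_zero_right]
    have h1 : ‖Z τ‖ ≤ ‖δ τ‖ + ‖xbar τ‖ := by
      calc ‖Z τ‖ = ‖δ τ + xbar τ‖ := by rw [← hδeq τ]; congr 1; abel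
        _ ≤ ‖δ τ‖ + ‖xbar τ‖ := norm_add_le _ _
    linarith [hgron τ hτ, hxbdd τ, hεC₁]
  -- the remainder and its bound
  set R : ℝ → E2 := fun τ => u (Z τ) - u (xbar τ) - (fderiv ℝ u (xbar τ)) (δ τ)
    + ε • (w (Z τ) (τ + t - p) - w (xbar τ) (τ + t - p)) with hRdef
  have hRbd : ∀ τ ∈ Set.uIcc p pd, ‖R τ‖ ≤ CR * ε^2 := by
    intro τ hτ
    have htay := taylor_bound hu hBallconv hB (hxB τ) (hZB τ hτ)
    rw [hδeq τ] at htay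
    have hwd : ‖w (Z τ) (τ + t - p) - w (xbar τ) (τ + t - p)‖ ≤ Kw * ‖δ τ‖ := by
      have h2 := (hwLip (τ + t - p)).dist_le_mul (Z τ) (xbar τ)
      rw [dist_eq_norm, dist_eq_norm, hδeq τ] at h2
      exact h2
    have hδτ := hgron τ hτ
    have hδn := norm_nonneg (δ τ)
    have h5 : ‖δ τ‖ * ‖δ τ‖ ≤ (ε * C₁) * (ε * C₁) :=
      mul_le_mul hδτ hδτ hδn (by positivity)
    calc ‖R τ‖ ≤ ‖u (Z τ) - u (xbar τ) - (fderiv ℝ u (xbar τ)) (δ τ)‖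
          + ‖ε • (w (Z τ) (τ + t - p) - w (xbar τ) (τ + t - p))‖ := by
          rw [hRdef]; exact norm_add_le _ _
      _ ≤ B * ‖δ τ‖ * ‖δ τ‖ + ε * ((Kw:ℝ) * ‖δ τ‖) := by
          apply add_le_add htay
          rw [norm_smul, Real.norm_eq_abs, abs_of_pos hε0]
          exact mul_le_mul_of_nonneg_left hwd hε0.le
      _ ≤ CR * ε^2 := by
          simp only [hCRdef]
          nlinarith [mul_le_mul_of_nonneg_left h5 hB0,
            mul_le_mul_of_nonneg_left hδτ (mul_nonneg hε0.le Kw.coe_nonneg)]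
  -- bound on the exponential weight
  have hgbd : ∀ τ ∈ Set.uIcc p pd, Real.exp (∫ ξ in τ..p, div2 u (xbar ξ)) ≤ Gbd := by
    intro τ hτ
    have hIsub : Set.uIcc τ p ⊆ Set.Icc (-Q) Q := Set.uIcc_subset_Icc (hsub hτ) hpQ
    have h1 : ‖∫ ξ in τ..p, div2 u (xbar ξ)‖ ≤ Dbd * |p - τ| :=
      intervalIntegral.norm_integral_le_of_norm_le_const (fun ξ hξ => by
        rw [Real.norm_eq_abs]
        exact hDbd ξ (hIsub (Set.uIoc_subset_uIcc hξ)))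
    rw [Real.norm_eq_abs] at h1
    have hτQ := hsub hτ
    have h2 : |p - τ| ≤ L := by
      rw [abs_sub_le_iff]
      constructor <;> simp only [hLdef] <;> linarith [hτQ.1, hτQ.2, hpQ.1, hpQ.2]
    rw [hGbddef]
    apply Real.exp_le_exp.2
    have h3 := (abs_le.1 h1).2
    nlinarith [mul_le_mul_of_nonneg_left h2 hDbd0]
  -- derivative computations
  set m : ℝ → ℝ := fun τ => ⟪Jrot (u (xbar τ)), δ τ⟫_ℝ with hmdef
  have hνd : ∀ τ, HasDerivAt (fun s => Jrot (u (xbar s)))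
      (Jrot ((fderiv ℝ u (xbar τ)) (u (xbar τ)))) τ := by
    intro τ
    have h2 : HasDerivAt (fun s => u (xbar s)) ((fderiv ℝ u (xbar τ)) (u (xbar τ))) τ :=
      (hu.differentiable (by norm_num) (xbar τ)).hasFDerivAt.comp_hasDerivAt τ (hxbar τ)
    have h3 := (JL.hasFDerivAt (x := u (xbar τ))).comp_hasDerivAt τ h2
    exact h3
  have hmd : ∀ τ, HasDerivAt m
      (⟪Jrot (u (xbar τ)), u (Z τ) + ε • w (Z τ) (τ + t - p) - u (xbar τ)⟫_ℝ
        + ⟪Jrot ((fderiv ℝ u (xbar τ)) (u (xbar τ))), δ τ⟫_ℝ) τ := by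
    intro τ
    simp only [hmdef]
    exact HasDerivAt.inner ℝ (hνd τ) (hδd τ)
  set F1 : ℝ → ℝ := fun τ => Real.exp (∫ ξ in τ..p, div2 u (xbar ξ)) *
      ⟪Jrot (u (xbar τ)), w (xbar τ) (τ + t - p)⟫_ℝ with hF1def
  set F2 : ℝ → ℝ := fun τ => Real.exp (∫ ξ in τ..p, div2 u (xbar ξ)) *
      ⟪Jrot (u (xbar τ)), R τ⟫_ℝ with hF2def
  -- continuity of the integrands
  have hexpc : Continuous fun τ => Real.exp (∫ ξ in τ..p, div2 u (xbar ξ)) :=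
    Real.continuous_exp.comp
      (continuous_iff_continuousAt.2 fun τ => (hasDerivAt_intb hdivc p τ).continuousAt)
  have hνc : Continuous fun τ => Jrot (u (xbar τ)) := by
    have := JL.continuous.comp (huc.comp hxc)
    exact this
  have hwτc : Continuous fun τ => w (xbar τ) (τ + t - p) := by
    have := hwc.comp ((hxc.prodMk ((continuous_id.add continuous_const).sub
      continuous_const)) : Continuous fun τ => (xbar τ, τ + t - p))
    exact this
  have hwZc : Continuous fun τ => w (Z τ) (τ + t - p) := by
    have := hwc.comp ((hZc.prodMk ((continuous_id.add continuous_const).sub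
      continuous_const)) : Continuous fun τ => (Z τ, τ + t - p))
    exact this
  have hRc : Continuous R := by
    rw [hRdef]
    exact (((huc.comp hZc).sub (huc.comp hxc)).sub
      (((hu.fderiv_right (m := 1) (by norm_num)).continuous.comp hxc).clm_apply hδc)).add
      ((continuous_const (y := ε)).smul (hwZc.sub hwτc) :
        Continuous fun τ => ε • (w (Z τ) (τ + t - p) - w (xbar τ) (τ + t - p)))
  have hF1c : Continuous F1 := by rw [hF1def]; exact hexpc.mul (hνc.inner hwτc)
  have hF2c : Continuous F2 := by rw [hF2def]; exact hexpc.mul (hνc.inner hRc)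
  -- the key derivative identity
  have hhd : ∀ τ, HasDerivAt (fun s => Real.exp (∫ ξ in s..p, div2 u (xbar ξ)) * m s)
      (ε * F1 τ + F2 τ) τ := by
    intro τ
    have hgd : HasDerivAt (fun s => Real.exp (∫ ξ in s..p, div2 u (xbar ξ)))
        (Real.exp (∫ ξ in τ..p, div2 u (xbar ξ)) * -(div2 u (xbar τ))) τ :=
      (hasDerivAt_intb hdivc p τ).exp
    have h1 := hgd.mul (hmd τ)
    refine HasDerivAt.congr_deriv h1 (Eq.symm ?_)
    have hsp : u (Z τ) + ε • w (Z τ) (τ + t - p) - u (xbar τ)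
        = (fderiv ℝ u (xbar τ)) (δ τ) + (ε • w (xbar τ) (τ + t - p) + R τ) := by
      simp only [hRdef, smul_sub]
      abel
    rw [hsp, inner_add_right, inner_add_right, real_inner_smul_right]
    have htr := traceJ (fderiv ℝ u (xbar τ)) (u (xbar τ)) (δ τ)
    have hdd : LinearMap.trace ℝ E2 (fderiv ℝ u (xbar τ)).toLinearMap
        = div2 u (xbar τ) := rfl
    rw [hdd] at htr
    simp only [hF1def, hF2def, hmdef]
    linear_combination (-(Real.exp (∫ ξ in τ..p, div2 u (xbar ξ)))) * htr
  -- fundamental theorem of calculus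
  have hFTC := intervalIntegral.integral_eq_sub_of_hasDerivAt
    (f := fun s => Real.exp (∫ ξ in s..p, div2 u (xbar ξ)) * m s)
    (f' := fun τ => ε * F1 τ + F2 τ) (a := p) (b := pd)
    (fun τ _ => hhd τ)
    (((continuous_const.mul hF1c).add hF2c).intervalIntegrable p pd)
  have hmpd : m pd = 0 := by simp [hmdef, hδpd]
  have hmp : m p = -(ε * ∫ τ in p..pd, F1 τ) - ∫ τ in p..pd, F2 τ := by
    rw [intervalIntegral.integral_add ((hF1c.intervalIntegrable p pd).const_mul ε)
      (hF2c.intervalIntegrable p pd), intervalIntegral.integral_const_mul] at hFTC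
    simp only [hmpd, intervalIntegral.integral_same, Real.exp_zero, one_mul,
      mul_zero, zero_sub] at hFTC
    linarith
  have hMd : MdClosed u xbar w pd ε p t = -(ε * ∫ τ in p..pd, F1 τ) := by
    simp only [hF1def]; rfl
  have hdiffeq : m p - MdClosed u xbar w pd ε p t = -(∫ τ in p..pd, F2 τ) := by
    rw [hMd, hmp]; ring
  -- bound on the error integral
  have hF2bd : |∫ τ in p..pd, F2 τ| ≤ Gbd * (Mu * (CR * ε^2)) * L := by
    have h1 : ‖∫ τ in p..pd, F2 τ‖ ≤ Gbd * (Mu * (CR * ε^2)) * |pd - p| := by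
      apply intervalIntegral.norm_integral_le_of_norm_le_const
      intro τ hτ
      have hτ' : τ ∈ Set.uIcc p pd := Set.uIoc_subset_uIcc hτ
      have hg := hgbd τ hτ'
      have hR := hRbd τ hτ'
      have hin : |⟪Jrot (u (xbar τ)), R τ⟫_ℝ| ≤ Mu * (CR * ε^2) := by
        calc |⟪Jrot (u (xbar τ)), R τ⟫_ℝ| ≤ ‖Jrot (u (xbar τ))‖ * ‖R τ‖ :=
              abs_real_inner_le_norm _ _
          _ = ‖u (xbar τ)‖ * ‖R τ‖ := by rw [Jrot_norm]
          _ ≤ Mu * (CR * ε^2) := mul_le_mul (hMu τ) hR (norm_nonneg _) hMu0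
      simp only [hF2def]
      rw [Real.norm_eq_abs, abs_mul, abs_of_pos (Real.exp_pos _)]
      exact mul_le_mul hg hin (abs_nonneg _) hGbd0.le
    rw [Real.norm_eq_abs] at h1
    have hpQ' := hpQ; have hpdQ' := hpdQ
    have h2 : |pd - p| ≤ L := by
      rw [abs_sub_le_iff]
      constructor <;> simp only [hLdef] <;> linarith [hpQ'.1, hpQ'.2, hpdQ'.1, hpdQ'.2]
    have h3 : 0 ≤ Gbd * (Mu * (CR * ε^2)) :=
      mul_nonneg hGbd0.le (mul_nonneg hMu0 (mul_nonneg hCR0 (sq_nonneg _)))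
    calc |∫ τ in p..pd, F2 τ| ≤ Gbd * (Mu * (CR * ε^2)) * |pd - p| := h1
      _ ≤ Gbd * (Mu * (CR * ε^2)) * L := mul_le_mul_of_nonneg_left h2 h3
  -- conclusion
  have hXt : X t - xbar p = δ p := by
    simp only [hδdef, hZdef]
    rw [show p + t - p = t from by ring]
  have hnc : c ≤ ‖u (xbar p)‖ := hcmin p hp
  have hn0 : (0:ℝ) < ‖u (xbar p)‖ := norm_pos_iff.2 (hune p)
  have hip : ⟪X t - xbar p, (‖u (xbar p)‖)⁻¹ • Jrot (u (xbar p))⟫_ℝ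
      = (‖u (xbar p)‖)⁻¹ * m p := by
    rw [real_inner_smul_right, hXt]
    congr 1
    simp only [hmdef]
    exact real_inner_comm _ _
  rw [hip]
  have hsplit : (‖u (xbar p)‖)⁻¹ * m p - MdClosed u xbar w pd ε p t / ‖u (xbar p)‖
      = (‖u (xbar p)‖)⁻¹ * (m p - MdClosed u xbar w pd ε p t) := by
    rw [div_eq_inv_mul]; ring
  rw [hsplit, abs_mul, abs_of_pos (inv_pos.2 hn0)]
  have h6 : |m p - MdClosed u xbar w pd ε p t| = |∫ τ in p..pd, F2 τ| := by
    rw [hdiffeq, abs_neg]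
  have h7 : (‖u (xbar p)‖)⁻¹ ≤ c⁻¹ := by
    apply inv_anti₀ hc0 hnc
  calc (‖u (xbar p)‖)⁻¹ * |m p - MdClosed u xbar w pd ε p t|
      ≤ c⁻¹ * (Gbd * (Mu * (CR * ε^2)) * L) := by
        apply mul_le_mul h7 (by rw [h6]; exact hF2bd) (abs_nonneg _) (inv_nonneg.2 hc0.le)
    _ ≤ Cfin * ε^2 := by
        simp only [hCfindef]
        nlinarith [sq_nonneg ε, mul_nonneg (inv_nonneg.2 hc0.le)
          (mul_nonneg (mul_nonneg hGbd0.le (mul_nonneg hMu0 hCR0)) hL0.le)]
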